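/- (Accuracy of the soft-min MFC fixed point.) Under Assumption (Lip), L_p < |𝒳|c_min, and 0 < φ < φ_max, suppose there is a pair (μ̂, Q̂) with μ̂ = P^{argmin_e Q̂, μ̂}μ̂ and Q̂ = B_{μ̂}Q̂. Let δ > 0 be the action gap of Q̂ and assume φ_max − 1/δ > 0. Then ‖μ*_{Q*φ} − μ̂‖₁ ≤ 2√|𝒜|·(1−γ)·exp(−φδ)/((L_f + (γ/(1−γ))L_p‖f‖∞)(φ_max − φ)) and ‖Q*φ − Q̂‖∞ ≤ 2√|𝒜|·exp(−φδ)/(φ_max − φ), where μ*_Q is the unique fixed point of μ ↦ P^{softmin_φ Q,μ}μ and Q*φ is the unique fixed point of Q ↦ B_{μ*_Q}Q. -/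

import Mathlib

set_option linter.unusedSectionVars false


open Finset Filter
open scoped Classical

noncomputable section

variable {X A : Type*}

/-- A probability vector on a finite set. -/
def IsProb [Fintype X] (μ : X → ℝ) : Prop := (∀ x, 0 ≤ μ x) ∧ ∑ x, μ x = 1

/-- ℓ¹ norm of a signed measure / vector on a finite set. -/
def l1 [Fintype X] (μ : X → ℝ) : ℝ := ∑ x, |μ x|

/-- Sup norm of a Q-table. -/
def supQ [Fintype X] [Fintype A] [Nonempty X] [Nonempty A] (Q : X → A → ℝ) : ℝ :=
  Finset.univ.sup' Finset.univ_nonempty (fun xa : X × A => |Q xa.1 xa.2|)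

/-- Minimum of a row of a Q-table (minimum over actions). -/
def minRow [Fintype A] [Nonempty A] (q : A → ℝ) : ℝ :=
  Finset.univ.inf' Finset.univ_nonempty q

/-- The soft-min distribution over actions with parameter φ. -/
def softmin [Fintype A] (φ : ℝ) (z : A → ℝ) (a : A) : ℝ :=
  Real.exp (-φ * z a) / ∑ a', Real.exp (-φ * z a')

/-- The argmin_e policy: uniform over the minimizers, zero elsewhere. -/
def argminE [Fintype A] [Nonempty A] (q : A → ℝ) (a : A) : ℝ :=
  if q a = minRow q then (1 : ℝ) / (Finset.univ.filter fun a' => q a' = minRow q).card else 0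

/-- (P^{π,μ} ν)(x) = ∑_{x'} ν(x') ∑_a π(a|x') p(x|x',a,μ). -/
def Ppush [Fintype X] [Fintype A] (p : X → A → (X → ℝ) → X → ℝ)
    (π : X → A → ℝ) (μ ν : X → ℝ) (x : X) : ℝ :=
  ∑ x', ν x' * ∑ a, π x' a * p x' a μ x

/-- P₂(Q,μ) = P^{softmin_φ Q, μ} μ − μ. -/
def P2 [Fintype X] [Fintype A] (φ : ℝ) (p : X → A → (X → ℝ) → X → ℝ)
    (Q : X → A → ℝ) (μ : X → ℝ) (x : X) : ℝ :=
  Ppush p (fun x' => softmin φ (Q x')) μ μ x - μ x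

/-- The Bellman operator (B_μ Q)(x,a) = f(x,a,μ) + γ ∑_{x'} p(x'|x,a,μ) min_{a'} Q(x',a'). -/
def bell [Fintype X] [Fintype A] [Nonempty A]
    (f : X → A → (X → ℝ) → ℝ) (p : X → A → (X → ℝ) → X → ℝ) (γ : ℝ)
    (μ : X → ℝ) (Q : X → A → ℝ) (x : X) (a : A) : ℝ :=
  f x a μ + γ * ∑ x', p x a μ x' * minRow (Q x')

/-- T₂(Q,μ) = B_μ Q − Q. -/
def T2 [Fintype X] [Fintype A] [Nonempty A]
    (f : X → A → (X → ℝ) → ℝ) (p : X → A → (X → ℝ) → X → ℝ) (γ : ℝ)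
    (Q : X → A → ℝ) (μ : X → ℝ) (x : X) (a : A) : ℝ :=
  bell f p γ μ Q x a - Q x a

section Aux
variable [Fintype A] [Nonempty A]

lemma sumexp_pos (φ : ℝ) (z : A → ℝ) : 0 < ∑ a', Real.exp (-φ * z a') :=
  Finset.sum_pos (fun _ _ => Real.exp_pos _) Finset.univ_nonempty

lemma softmin_pos (φ : ℝ) (z : A → ℝ) (a : A) : 0 < softmin φ z a :=
  div_pos (Real.exp_pos _) (sumexp_pos φ z)

lemma softmin_sum (φ : ℝ) (z : A → ℝ) : ∑ a, softmin φ z a = 1 := by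
  unfold softmin
  rw [← Finset.sum_div, div_self (ne_of_gt (sumexp_pos φ z))]

lemma minRow_le (q : A → ℝ) (a : A) : minRow q ≤ q a :=
  Finset.inf'_le _ (Finset.mem_univ a)

lemma exists_minRow (q : A → ℝ) : ∃ a, minRow q = q a := by
  obtain ⟨a, _, ha⟩ := Finset.exists_mem_eq_inf' (Finset.univ_nonempty) q
  exact ⟨a, ha⟩

lemma argminE_nonneg (q : A → ℝ) (a : A) : 0 ≤ argminE q a := by
  unfold argminE
  split
  · positivity
  · exact le_refl 0

lemma argminE_filter_card_pos (q : A → ℝ) :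
    0 < (Finset.univ.filter fun a' => q a' = minRow q).card := by
  obtain ⟨a, ha⟩ := exists_minRow q
  exact Finset.card_pos.2 ⟨a, Finset.mem_filter.2 ⟨Finset.mem_univ a, ha.symm⟩⟩

lemma argminE_sum (q : A → ℝ) : ∑ a, argminE q a = 1 := by
  unfold argminE
  rw [← Finset.sum_filter, Finset.sum_const, nsmul_eq_mul, mul_one_div, div_self]
  exact_mod_cast (argminE_filter_card_pos q).ne'

lemma minRow_abs_le (q : A → ℝ) (c : ℝ) (h : ∀ a, |q a| ≤ c) : |minRow q| ≤ c := by
  obtain ⟨a, ha⟩ := exists_minRow q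
  rw [ha]; exact h a

lemma minRow_sub_le (q q' : A → ℝ) (c : ℝ) (h : ∀ a, |q a - q' a| ≤ c) :
    |minRow q - minRow q'| ≤ c := by
  rw [abs_le]
  obtain ⟨a, ha⟩ := exists_minRow q'
  obtain ⟨b, hb⟩ := exists_minRow q
  have h1 : minRow q ≤ q a := minRow_le q a
  have h2 : minRow q' ≤ q' b := minRow_le q' b
  have ha' := abs_le.1 (h a)
  have hb' := abs_le.1 (h b)
  constructor <;> [skip; skip] <;>
    first
      | linarith [ha'.1, ha'.2, hb'.1, hb'.2, ha ▸ h1, hb ▸ h2]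
      | linarith [ha'.1, ha'.2, hb'.1, hb'.2]

end Aux

section AuxQ
variable [Fintype X] [Fintype A] [Nonempty X] [Nonempty A]

lemma supQ_le_iff (Q : X → A → ℝ) (c : ℝ) : supQ Q ≤ c ↔ ∀ x a, |Q x a| ≤ c := by
  unfold supQ
  rw [Finset.sup'_le_iff]
  constructor
  · intro h x a; exact h (x, a) (Finset.mem_univ _)
  · intro h xa _; exact h xa.1 xa.2

lemma le_supQ (Q : X → A → ℝ) (x : X) (a : A) : |Q x a| ≤ supQ Q :=
  Finset.le_sup' (f := fun xa : X × A => |Q xa.1 xa.2|) (Finset.mem_univ (x, a))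

lemma supQ_nonneg (Q : X → A → ℝ) : 0 ≤ supQ Q := by
  obtain ⟨x⟩ := (inferInstance : Nonempty X)
  obtain ⟨a⟩ := (inferInstance : Nonempty A)
  exact le_trans (abs_nonneg _) (le_supQ Q x a)

lemma l1_nonneg (μ : X → ℝ) : 0 ≤ l1 μ :=
  Finset.sum_nonneg fun _ _ => abs_nonneg _

end AuxQ
section Lip
variable [Fintype A] [Nonempty A]

lemma softmin_lipschitz (φ : ℝ) (hφ : 0 ≤ φ) (z z' : A → ℝ) (ε : ℝ)
    (hε : ∀ a, |z' a - z a| ≤ ε) :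
    ∑ a, |softmin φ z' a - softmin φ z a| ≤ 2 * φ * ε := by
  obtain ⟨a0⟩ := (inferInstance : Nonempty A)
  have hε0 : 0 ≤ ε := le_trans (abs_nonneg _) (hε a0)
  set Δ : A → ℝ := fun b => z' b - z b with hΔ
  set u : ℝ → A → ℝ := fun t b => Real.exp (-φ * (z b + t * Δ b)) with hu_def
  set U : ℝ → ℝ := fun t => ∑ b, u t b with hU_def
  set V : ℝ → ℝ := fun t => ∑ b, u t b * (-φ * Δ b) with hV_def
  have hUpos : ∀ t, 0 < U t := fun t =>
    Finset.sum_pos (fun _ _ => Real.exp_pos _) Finset.univ_nonempty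
  set s : A → ℝ := fun a => if 0 ≤ softmin φ z' a - softmin φ z a then 1 else -1 with hs_def
  set F : ℝ → ℝ := fun t => ∑ a, s a * softmin φ (fun b => z b + t * Δ b) a with hF_def
  set F' : ℝ → ℝ := fun t => ∑ a,
      s a * ((u t a * (-φ * Δ a) * U t - u t a * V t) / (U t) ^ 2) with hF'_def
  have hder : ∀ t : ℝ, HasDerivAt F (F' t) t := by
    intro t
    apply HasDerivAt.fun_sum
    intro a _
    apply HasDerivAt.const_mul
    have h1 : HasDerivAt (fun t : ℝ => z a + t * Δ a) (Δ a) t := by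
      simpa using ((hasDerivAt_id t).mul_const (Δ a)).const_add (z a)
    have h2 : HasDerivAt (fun t : ℝ => -φ * (z a + t * Δ a)) (-φ * Δ a) t :=
      h1.const_mul (-φ)
    have h3 : HasDerivAt (fun t : ℝ => u t a) (u t a * (-φ * Δ a)) t := h2.exp
    have h4 : HasDerivAt U (V t) t := by
      apply HasDerivAt.fun_sum
      intro b _
      have h1b : HasDerivAt (fun t : ℝ => z b + t * Δ b) (Δ b) t := by
        simpa using ((hasDerivAt_id t).mul_const (Δ b)).const_add (z b)
      exact (h1b.const_mul (-φ)).exp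
    have := h3.div h4 (hUpos t).ne'
    convert this using 2
    rfl
  have hbound : ∀ t : ℝ, |F' t| ≤ 2 * φ * ε := by
    intro t
    have habs : ∀ a, |s a * ((u t a * (-φ * Δ a) * U t - u t a * V t) / (U t) ^ 2)|
        ≤ 2 * φ * ε * (u t a / U t) := by
      intro a
      have hsa : |s a| = 1 := by
        show |if 0 ≤ softmin φ z' a - softmin φ z a then (1:ℝ) else -1| = 1
        split <;> simp
      rw [abs_mul, hsa, one_mul, abs_div]
      have hU2 : |(U t) ^ 2| = (U t)^2 := abs_of_pos (pow_pos (hUpos t) 2)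
      rw [hU2]
      have hnum : |u t a * (-φ * Δ a) * U t - u t a * V t|
          ≤ 2 * φ * ε * (u t a * U t) := by
        have h1 : |u t a * (-φ * Δ a) * U t| ≤ φ * ε * (u t a * U t) := by
          rw [abs_mul, abs_mul]
          have : |(-φ * Δ a)| ≤ φ * ε := by
            rw [abs_mul, abs_neg, abs_of_nonneg hφ]
            exact mul_le_mul_of_nonneg_left (hε a) hφ
          have hu0 : |u t a| = u t a := abs_of_pos (Real.exp_pos _)
          have hU0 : |U t| = U t := abs_of_pos (hUpos t)
          rw [hu0, hU0]
          calc u t a * |(-φ * Δ a)| * U t ≤ u t a * (φ * ε) * U t := by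
                apply mul_le_mul_of_nonneg_right _ (hUpos t).le
                exact mul_le_mul_of_nonneg_left this (Real.exp_pos _).le
            _ = φ * ε * (u t a * U t) := by ring
        have h2 : |u t a * V t| ≤ φ * ε * (u t a * U t) := by
          rw [abs_mul, abs_of_pos (Real.exp_pos _ : (0:ℝ) < u t a)]
          have hV : |V t| ≤ φ * ε * U t := by
            unfold V U
            calc |∑ b, u t b * (-φ * Δ b)| ≤ ∑ b, |u t b * (-φ * Δ b)| :=
                  Finset.abs_sum_le_sum_abs _ _
              _ ≤ ∑ b, u t b * (φ * ε) := by
                  apply Finset.sum_le_sum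
                  intro b _
                  rw [abs_mul, abs_of_pos (Real.exp_pos _ : (0:ℝ) < u t b)]
                  apply mul_le_mul_of_nonneg_left _ (Real.exp_pos _).le
                  rw [abs_mul, abs_neg, abs_of_nonneg hφ]
                  exact mul_le_mul_of_nonneg_left (hε b) hφ
              _ = φ * ε * ∑ b, u t b := by rw [← Finset.sum_mul]; ring
          calc u t a * |V t| ≤ u t a * (φ * ε * U t) :=
                mul_le_mul_of_nonneg_left hV (Real.exp_pos _).le
            _ = φ * ε * (u t a * U t) := by ring
        calc |u t a * (-φ * Δ a) * U t - u t a * V t|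
            ≤ |u t a * (-φ * Δ a) * U t| + |u t a * V t| := abs_sub _ _
          _ ≤ 2 * φ * ε * (u t a * U t) := by linarith
      calc |u t a * (-φ * Δ a) * U t - u t a * V t| / (U t) ^ 2
          ≤ 2 * φ * ε * (u t a * U t) / (U t) ^ 2 := by
            gcongr
        _ = 2 * φ * ε * (u t a / U t) := by
            field_simp
    calc |F' t| ≤ ∑ a, |s a * ((u t a * (-φ * Δ a) * U t - u t a * V t) / (U t) ^ 2)| :=
          Finset.abs_sum_le_sum_abs _ _
      _ ≤ ∑ a, 2 * φ * ε * (u t a / U t) := Finset.sum_le_sum fun a _ => habs a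
      _ = 2 * φ * ε := by
          rw [← Finset.mul_sum, ← Finset.sum_div]
          show 2 * φ * ε * (U t / U t) = 2 * φ * ε
          rw [div_self (hUpos t).ne', mul_one]
  have hmvt : ‖F 1 - F 0‖ ≤ 2 * φ * ε * ‖(1:ℝ) - 0‖ :=
    Convex.norm_image_sub_le_of_norm_hasDerivWithin_le
      (fun x _ => (hder x).hasDerivWithinAt) (fun x _ => by simpa using hbound x)
      convex_univ (Set.mem_univ 0) (Set.mem_univ 1)
  have e1 : (fun b => z b + 1 * Δ b) = z' := by funext b; simp only [hΔ]; ring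
  have e0 : (fun b => z b + 0 * Δ b) = z := by funext b; simp only [hΔ]; ring
  have hF1 : F 1 - F 0 = ∑ a, |softmin φ z' a - softmin φ z a| := by
    show (∑ a, s a * softmin φ (fun b => z b + 1 * Δ b) a)
        - (∑ a, s a * softmin φ (fun b => z b + 0 * Δ b) a) = _
    rw [e1, e0, ← Finset.sum_sub_distrib]
    apply Finset.sum_congr rfl
    intro a _
    rw [← mul_sub]
    show (if 0 ≤ softmin φ z' a - softmin φ z a then (1:ℝ) else -1)
        * (softmin φ z' a - softmin φ z a) = |softmin φ z' a - softmin φ z a|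
    split
    next h => exact (one_mul _).trans (abs_of_nonneg h).symm
    next h => exact (neg_one_mul _).trans (abs_of_neg (not_le.mp h)).symm
  calc ∑ a, |softmin φ z' a - softmin φ z a| = F 1 - F 0 := hF1.symm
    _ ≤ |F 1 - F 0| := le_abs_self _
    _ ≤ 2 * φ * ε := by simpa using hmvt
end Lip
section Close
variable [Fintype A] [Nonempty A]

lemma softmin_argmin_close (φ δ : ℝ) (hφ : 0 ≤ φ) (q : A → ℝ)
    (hgap : ∀ a, minRow q < q a → minRow q + δ ≤ q a) :
    ∑ a, |softmin φ q a - argminE q a| ≤ 2 * (Fintype.card A : ℝ) * Real.exp (-φ * δ) := by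
  classical
  have hZpos := sumexp_pos φ q
  set Z := ∑ a', Real.exp (-φ * q a') with hZ
  set M := Finset.univ.filter (fun a' => q a' = minRow q) with hM
  set k := M.card with hk
  have hkpos : 0 < k := argminE_filter_card_pos q
  have hkR : (1:ℝ) ≤ (k:ℝ) := by exact_mod_cast hkpos
  have hMsum : ∑ a ∈ M, Real.exp (-φ * q a) = (k:ℝ) * Real.exp (-φ * minRow q) := by
    rw [Finset.sum_congr rfl (fun a ha => by rw [(Finset.mem_filter.mp ha).2]),
        Finset.sum_const, nsmul_eq_mul]
  have hZk : (k:ℝ) * Real.exp (-φ * minRow q) ≤ Z := by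
    rw [← hMsum]
    exact Finset.sum_le_sum_of_subset_of_nonneg (Finset.filter_subset _ _)
      (fun _ _ _ => (Real.exp_pos _).le)
  have hemZ : Real.exp (-φ * minRow q) ≤ Z :=
    le_trans (by nlinarith [Real.exp_pos (-φ * minRow q)]) hZk
  have hout : ∀ a, a ∉ M → softmin φ q a ≤ Real.exp (-φ * δ) := by
    intro a ha
    have hne : q a ≠ minRow q := by
      intro h; exact ha (Finset.mem_filter.mpr ⟨Finset.mem_univ a, h⟩)
    have hga : minRow q + δ ≤ q a := hgap a (lt_of_le_of_ne (minRow_le q a) (Ne.symm hne))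
    have h1 : softmin φ q a ≤ Real.exp (-φ * (minRow q + δ)) / Real.exp (-φ * minRow q) := by
      apply div_le_div₀ (Real.exp_pos _).le _ (Real.exp_pos _) hemZ
      exact Real.exp_le_exp.mpr (by nlinarith)
    calc softmin φ q a ≤ _ := h1
      _ = Real.exp (-φ * δ) := by rw [← Real.exp_sub]; ring_nf
  have hinle : ∀ a ∈ M, softmin φ q a ≤ 1 / (k:ℝ) := by
    intro a ha
    have hqa : q a = minRow q := (Finset.mem_filter.mp ha).2
    have h2 : softmin φ q a = Real.exp (-φ * minRow q) / Z := by
      unfold softmin; rw [hqa]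
    rw [h2, div_le_div_iff₀ hZpos (by positivity)]
    rw [one_mul]
    nlinarith [hZk]
  have hsplit := Finset.sum_filter_add_sum_filter_not Finset.univ (fun a' => q a' = minRow q)
      (fun a => |softmin φ q a - argminE q a|)
  have hMpart : ∑ a ∈ M, |softmin φ q a - argminE q a|
      = ∑ a ∈ Finset.univ.filter (fun a' => ¬ q a' = minRow q), softmin φ q a := by
    have h1 : ∑ a ∈ M, |softmin φ q a - argminE q a|
        = ∑ a ∈ M, (1/(k:ℝ) - softmin φ q a) := by
      apply Finset.sum_congr rfl
      intro a ha
      have hqa : q a = minRow q := (Finset.mem_filter.mp ha).2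
      have hargE : argminE q a = 1/(k:ℝ) := by
        unfold argminE; rw [if_pos hqa, ← hM, ← hk]
      rw [hargE, abs_sub_comm, abs_of_nonneg (by linarith [hinle a ha])]
    rw [h1, Finset.sum_sub_distrib, Finset.sum_const, nsmul_eq_mul]
    have hks : (k:ℝ) * (1/(k:ℝ)) = 1 := by field_simp
    rw [hks]
    have htot := softmin_sum φ q
    have hsplit2 := Finset.sum_filter_add_sum_filter_not Finset.univ
      (fun a' => q a' = minRow q) (softmin φ q)
    rw [htot] at hsplit2
    rw [← hM] at hsplit2
    linarith
  have hnotpart : ∑ a ∈ Finset.univ.filter (fun a' => ¬ q a' = minRow q),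
        |softmin φ q a - argminE q a|
      = ∑ a ∈ Finset.univ.filter (fun a' => ¬ q a' = minRow q), softmin φ q a := by
    apply Finset.sum_congr rfl
    intro a ha
    have hqa : ¬ q a = minRow q := (Finset.mem_filter.mp ha).2
    rw [show argminE q a = 0 from by unfold argminE; rw [if_neg hqa], sub_zero,
      abs_of_nonneg (softmin_pos φ q a).le]
  have hb : ∑ a ∈ Finset.univ.filter (fun a' => ¬ q a' = minRow q), softmin φ q a
      ≤ (Fintype.card A : ℝ) * Real.exp (-φ * δ) := by
    have hcard : ((Finset.univ.filter (fun a' => ¬ q a' = minRow q)).card : ℝ)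
        ≤ (Fintype.card A : ℝ) := by
      exact_mod_cast Finset.card_filter_le _ _
    calc ∑ a ∈ Finset.univ.filter (fun a' => ¬ q a' = minRow q), softmin φ q a
        ≤ ∑ a ∈ Finset.univ.filter (fun a' => ¬ q a' = minRow q), Real.exp (-φ * δ) :=
          Finset.sum_le_sum (fun a ha => hout a (by
            intro hmem
            exact (Finset.mem_filter.mp ha).2 (Finset.mem_filter.mp hmem).2))
      _ = ((Finset.univ.filter (fun a' => ¬ q a' = minRow q)).card : ℝ) * Real.exp (-φ * δ) := by
          rw [Finset.sum_const, nsmul_eq_mul]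
      _ ≤ (Fintype.card A : ℝ) * Real.exp (-φ * δ) :=
          mul_le_mul_of_nonneg_right hcard (Real.exp_pos _).le
  rw [← hsplit]
  rw [← hM] at *
  rw [hMpart, hnotpart]
  linarith
end Close
section Chain
variable [Fintype X] [Fintype A] [Nonempty X] [Nonempty A]

lemma measure_chain
    (p : X → A → (X → ℝ) → X → ℝ)
    (ν μh : X → ℝ) (hν : IsProb ν) (hμ : IsProb μh)
    (hp0' : ∀ x a x', 0 ≤ p x a μh x')
    (hp1 : ∀ x a, ∑ x', p x a ν x' = 1) (hp1' : ∀ x a, ∑ x', p x a μh x' = 1)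
    (cmin : ℝ) (hcmin0 : 0 ≤ cmin) (hcmin : ∀ x a x', cmin ≤ p x a ν x')
    (Lp : ℝ)
    (hLp : ∀ x a, ∑ x', |p x a ν x' - p x a μh x'| ≤ Lp * l1 (fun y => ν y - μh y))
    (π πh : X → A → ℝ)
    (hπ0 : ∀ x a, 0 ≤ π x a) (hπ1 : ∀ x, ∑ a, π x a = 1)
    (hπh0 : ∀ x a, 0 ≤ πh x a) (hπh1 : ∀ x, ∑ a, πh x a = 1)
    (hνfix : Ppush p π ν ν = ν) (hμfix : Ppush p πh μh μh = μh)
    (B : ℝ) (hB : ∀ x, ∑ a, |π x a - πh x a| ≤ B) :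
    ((Fintype.card X : ℝ) * cmin - Lp) * l1 (fun x => ν x - μh x) ≤ B := by
  classical
  set d : X → ℝ := fun x => ν x - μh x with hd
  set E : ℝ := l1 d with hE
  have hdsum : ∑ x, d x = 0 := by
    unfold d
    rw [Finset.sum_sub_distrib, hν.2, hμ.2, sub_self]
  set K : X → X → ℝ := fun x x' => ∑ a, π x' a * p x' a ν x with hK
  -- decomposition
  have key : ∀ x, d x = (∑ x', d x' * K x x')
      + (∑ x', μh x' * ∑ a, π x' a * (p x' a ν x - p x' a μh x))
      + (∑ x', μh x' * ∑ a, (π x' a - πh x' a) * p x' a μh x) := by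
    intro x
    have e1 : d x = Ppush p π ν ν x - Ppush p πh μh μh x := by
      unfold d; rw [hνfix, hμfix]
    rw [e1]
    unfold Ppush
    rw [← Finset.sum_sub_distrib, ← Finset.sum_add_distrib, ← Finset.sum_add_distrib]
    apply Finset.sum_congr rfl
    intro x' _
    have e2 : (∑ a, π x' a * (p x' a ν x - p x' a μh x))
        = (∑ a, π x' a * p x' a ν x) - ∑ a, π x' a * p x' a μh x := by
      rw [← Finset.sum_sub_distrib]
      exact Finset.sum_congr rfl (fun a _ => mul_sub _ _ _)
    have e3 : (∑ a, (π x' a - πh x' a) * p x' a μh x)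
        = (∑ a, π x' a * p x' a μh x) - ∑ a, πh x' a * p x' a μh x := by
      rw [← Finset.sum_sub_distrib]
      exact Finset.sum_congr rfl (fun a _ => sub_mul _ _ _)
    rw [e2, e3]
    unfold d K
    ring
  -- the three bounds
  have hKc : ∀ x x', cmin ≤ K x x' := by
    intro x x'
    unfold K
    calc cmin = (∑ a, π x' a) * cmin := by rw [hπ1 x', one_mul]
      _ = ∑ a, π x' a * cmin := by rw [Finset.sum_mul]
      _ ≤ ∑ a, π x' a * p x' a ν x :=
        Finset.sum_le_sum fun a _ => mul_le_mul_of_nonneg_left (hcmin _ _ _) (hπ0 x' a)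
  have hK1 : ∀ x', ∑ x, K x x' = 1 := by
    intro x'
    unfold K
    rw [Finset.sum_comm]
    calc ∑ a, ∑ x, π x' a * p x' a ν x = ∑ a, π x' a * ∑ x, p x' a ν x := by
          exact Finset.sum_congr rfl fun a _ => (Finset.mul_sum _ _ _).symm
      _ = ∑ a, π x' a := by
          exact Finset.sum_congr rfl fun a _ => by rw [hp1 x' a, mul_one]
      _ = 1 := hπ1 x'
  have hA1 : ∑ x, |∑ x', d x' * K x x'| ≤ (1 - (Fintype.card X : ℝ) * cmin) * E := by
    have hshift : ∀ x, ∑ x', d x' * K x x' = ∑ x', d x' * (K x x' - cmin) := by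
      intro x
      rw [show ∑ x', d x' * (K x x' - cmin) = ∑ x', (d x' * K x x' - d x' * cmin) from
          Finset.sum_congr rfl fun x' _ => mul_sub _ _ _,
        Finset.sum_sub_distrib, ← Finset.sum_mul, hdsum, zero_mul, sub_zero]
    calc ∑ x, |∑ x', d x' * K x x'| = ∑ x, |∑ x', d x' * (K x x' - cmin)| := by
          exact Finset.sum_congr rfl fun x _ => by rw [hshift x]
      _ ≤ ∑ x, ∑ x', |d x'| * (K x x' - cmin) := by
          apply Finset.sum_le_sum
          intro x _
          calc |∑ x', d x' * (K x x' - cmin)| ≤ ∑ x', |d x' * (K x x' - cmin)| :=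
                Finset.abs_sum_le_sum_abs _ _
            _ = ∑ x', |d x'| * (K x x' - cmin) := by
                apply Finset.sum_congr rfl
                intro x' _
                rw [abs_mul]
                congr 1
                exact abs_of_nonneg (by linarith [hKc x x'])
      _ = ∑ x', |d x'| * (∑ x, (K x x' - cmin)) := by
          rw [Finset.sum_comm]
          exact Finset.sum_congr rfl fun x' _ => (Finset.mul_sum _ _ _).symm
      _ = ∑ x', |d x'| * (1 - (Fintype.card X : ℝ) * cmin) := by
          apply Finset.sum_congr rfl
          intro x' _
          rw [Finset.sum_sub_distrib, hK1 x', Finset.sum_const, nsmul_eq_mul,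
            Finset.card_univ]
      _ = (1 - (Fintype.card X : ℝ) * cmin) * E := by
          rw [← Finset.sum_mul]
          have hEe : E = ∑ x, |d x| := rfl
          rw [hEe]
          ring
  have hA2 : ∑ x, |∑ x', μh x' * ∑ a, π x' a * (p x' a ν x - p x' a μh x)| ≤ Lp * E := by
    calc ∑ x, |∑ x', μh x' * ∑ a, π x' a * (p x' a ν x - p x' a μh x)|
        ≤ ∑ x, ∑ x', μh x' * ∑ a, π x' a * |p x' a ν x - p x' a μh x| := by
          apply Finset.sum_le_sum
          intro x _
          calc |∑ x', μh x' * ∑ a, π x' a * (p x' a ν x - p x' a μh x)|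
              ≤ ∑ x', |μh x' * ∑ a, π x' a * (p x' a ν x - p x' a μh x)| :=
                Finset.abs_sum_le_sum_abs _ _
            _ ≤ ∑ x', μh x' * ∑ a, π x' a * |p x' a ν x - p x' a μh x| := by
                apply Finset.sum_le_sum
                intro x' _
                rw [abs_mul, abs_of_nonneg (hμ.1 x')]
                apply mul_le_mul_of_nonneg_left _ (hμ.1 x')
                calc |∑ a, π x' a * (p x' a ν x - p x' a μh x)|
                    ≤ ∑ a, |π x' a * (p x' a ν x - p x' a μh x)| :=
                      Finset.abs_sum_le_sum_abs _ _
                  _ = ∑ a, π x' a * |p x' a ν x - p x' a μh x| := by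
                      apply Finset.sum_congr rfl
                      intro a _
                      rw [abs_mul, abs_of_nonneg (hπ0 x' a)]
      _ = ∑ x', μh x' * ∑ a, π x' a * ∑ x, |p x' a ν x - p x' a μh x| := by
          rw [Finset.sum_comm]
          apply Finset.sum_congr rfl
          intro x' _
          rw [← Finset.mul_sum]
          congr 1
          rw [Finset.sum_comm]
          exact Finset.sum_congr rfl fun a _ => (Finset.mul_sum _ _ _).symm
      _ ≤ ∑ x', μh x' * ∑ a, π x' a * (Lp * E) := by
          apply Finset.sum_le_sum
          intro x' _
          apply mul_le_mul_of_nonneg_left _ (hμ.1 x')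
          apply Finset.sum_le_sum
          intro a _
          exact mul_le_mul_of_nonneg_left (hLp x' a) (hπ0 x' a)
      _ = Lp * E := by
          have : ∀ x' : X, (∑ a, π x' a * (Lp * E)) = Lp * E := by
            intro x'
            rw [← Finset.sum_mul, hπ1 x', one_mul]
          rw [Finset.sum_congr rfl fun x' _ => by rw [this x'], ← Finset.sum_mul, hμ.2, one_mul]
  have hA3 : ∑ x, |∑ x', μh x' * ∑ a, (π x' a - πh x' a) * p x' a μh x| ≤ B := by
    calc ∑ x, |∑ x', μh x' * ∑ a, (π x' a - πh x' a) * p x' a μh x|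
        ≤ ∑ x, ∑ x', μh x' * ∑ a, |π x' a - πh x' a| * p x' a μh x := by
          apply Finset.sum_le_sum
          intro x _
          calc |∑ x', μh x' * ∑ a, (π x' a - πh x' a) * p x' a μh x|
              ≤ ∑ x', |μh x' * ∑ a, (π x' a - πh x' a) * p x' a μh x| :=
                Finset.abs_sum_le_sum_abs _ _
            _ ≤ ∑ x', μh x' * ∑ a, |π x' a - πh x' a| * p x' a μh x := by
                apply Finset.sum_le_sum
                intro x' _
                rw [abs_mul, abs_of_nonneg (hμ.1 x')]
                apply mul_le_mul_of_nonneg_left _ (hμ.1 x')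
                calc |∑ a, (π x' a - πh x' a) * p x' a μh x|
                    ≤ ∑ a, |(π x' a - πh x' a) * p x' a μh x| :=
                      Finset.abs_sum_le_sum_abs _ _
                  _ = ∑ a, |π x' a - πh x' a| * p x' a μh x := by
                      apply Finset.sum_congr rfl
                      intro a _
                      rw [abs_mul, abs_of_nonneg (hp0' x' a x)]
      _ = ∑ x', μh x' * ∑ a, |π x' a - πh x' a| := by
          rw [Finset.sum_comm]
          apply Finset.sum_congr rfl
          intro x' _
          rw [← Finset.mul_sum]
          congr 1
          rw [Finset.sum_comm]
          calc ∑ a, ∑ x, |π x' a - πh x' a| * p x' a μh x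
              = ∑ a, |π x' a - πh x' a| * ∑ x, p x' a μh x :=
                Finset.sum_congr rfl fun a _ => (Finset.mul_sum _ _ _).symm
            _ = ∑ a, |π x' a - πh x' a| := by
                exact Finset.sum_congr rfl fun a _ => by rw [hp1' x' a, mul_one]
      _ ≤ ∑ x', μh x' * B := by
          apply Finset.sum_le_sum
          intro x' _
          exact mul_le_mul_of_nonneg_left (hB x') (hμ.1 x')
      _ = B := by rw [← Finset.sum_mul, hμ.2, one_mul]
  have hEbound : E ≤ (1 - (Fintype.card X : ℝ) * cmin) * E + Lp * E + B := by
    calc E = ∑ x, |d x| := rfl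
      _ ≤ ∑ x, (|∑ x', d x' * K x x'|
            + |∑ x', μh x' * ∑ a, π x' a * (p x' a ν x - p x' a μh x)|
            + |∑ x', μh x' * ∑ a, (π x' a - πh x' a) * p x' a μh x|) := by
          apply Finset.sum_le_sum
          intro x _
          rw [key x]
          have h1 := abs_add_le (∑ x', d x' * K x x')
            (∑ x', μh x' * ∑ a, π x' a * (p x' a ν x - p x' a μh x))
          have h2 := abs_add_le ((∑ x', d x' * K x x') +
            (∑ x', μh x' * ∑ a, π x' a * (p x' a ν x - p x' a μh x)))
            (∑ x', μh x' * ∑ a, (π x' a - πh x' a) * p x' a μh x)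
          linarith
      _ = (∑ x, |∑ x', d x' * K x x'|)
            + (∑ x, |∑ x', μh x' * ∑ a, π x' a * (p x' a ν x - p x' a μh x)|)
            + (∑ x, |∑ x', μh x' * ∑ a, (π x' a - πh x' a) * p x' a μh x|) := by
          rw [Finset.sum_add_distrib, Finset.sum_add_distrib]
      _ ≤ _ := by linarith
  have hgoal : ((Fintype.card X : ℝ) * cmin - Lp) * E
      = E - ((1 - (Fintype.card X : ℝ) * cmin) * E + Lp * E) := by ring
  show ((Fintype.card X : ℝ) * cmin - Lp) * E ≤ B
  rw [hgoal]
  linarith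
end Chain
section QSide
variable [Fintype X] [Fintype A] [Nonempty X] [Nonempty A]

lemma qhat_bound
    (γ : ℝ) (hγ0 : 0 < γ) (hγ1 : γ < 1)
    (f : X → A → (X → ℝ) → ℝ) (fnorm : ℝ)
    (p : X → A → (X → ℝ) → X → ℝ) (μh : X → ℝ)
    (hf : ∀ x a, |f x a μh| ≤ fnorm)
    (hp0 : ∀ x a x', 0 ≤ p x a μh x') (hp1 : ∀ x a, ∑ x', p x a μh x' = 1)
    (Q : X → A → ℝ) (hfix : bell f p γ μh Q = Q) :
    supQ Q ≤ fnorm / (1 - γ) := by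
  have h1γ : (0:ℝ) < 1 - γ := by linarith
  have key : supQ Q ≤ fnorm + γ * supQ Q := by
    rw [supQ_le_iff]
    intro x a
    have hxa : Q x a = bell f p γ μh Q x a := by rw [hfix]
    rw [hxa]
    unfold bell
    have h1 : |∑ x', p x a μh x' * minRow (Q x')| ≤ supQ Q := by
      calc |∑ x', p x a μh x' * minRow (Q x')|
          ≤ ∑ x', |p x a μh x' * minRow (Q x')| := Finset.abs_sum_le_sum_abs _ _
        _ = ∑ x', p x a μh x' * |minRow (Q x')| := by
            exact Finset.sum_congr rfl fun x' _ => by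
              rw [abs_mul, abs_of_nonneg (hp0 x a x')]
        _ ≤ ∑ x', p x a μh x' * supQ Q := by
            apply Finset.sum_le_sum
            intro x' _
            exact mul_le_mul_of_nonneg_left
              (minRow_abs_le (Q x') (supQ Q) (fun a' => le_supQ Q x' a')) (hp0 x a x')
        _ = supQ Q := by rw [← Finset.sum_mul, hp1 x a, one_mul]
    calc |f x a μh + γ * ∑ x', p x a μh x' * minRow (Q x')|
        ≤ |f x a μh| + |γ * ∑ x', p x a μh x' * minRow (Q x')| := abs_add_le _ _
      _ ≤ fnorm + γ * supQ Q := by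
          rw [abs_mul, abs_of_nonneg hγ0.le]
          have := mul_le_mul_of_nonneg_left h1 hγ0.le
          linarith [hf x a]
  rw [le_div_iff₀ h1γ]
  nlinarith [key]

lemma qdiff
    (γ : ℝ) (hγ0 : 0 < γ) (hγ1 : γ < 1)
    (f : X → A → (X → ℝ) → ℝ)
    (p : X → A → (X → ℝ) → X → ℝ)
    (ν μh : X → ℝ)
    (hp0 : ∀ x a x', 0 ≤ p x a ν x') (hp1 : ∀ x a, ∑ x', p x a ν x' = 1)
    (Lf Lp fnorm : ℝ) (hLp0 : 0 ≤ Lp) (hfnorm0 : 0 ≤ fnorm)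
    (hLf : ∀ x a, |f x a ν - f x a μh| ≤ Lf * l1 (fun y => ν y - μh y))
    (hLp : ∀ x a, ∑ x', |p x a ν x' - p x a μh x'| ≤ Lp * l1 (fun y => ν y - μh y))
    (Q Qh : X → A → ℝ)
    (hQfix : bell f p γ ν Q = Q) (hQhfix : bell f p γ μh Qh = Qh)
    (hQh : supQ Qh ≤ fnorm / (1 - γ)) :
    (1 - γ) * supQ (fun x a => Q x a - Qh x a)
      ≤ (Lf + γ / (1 - γ) * Lp * fnorm) * l1 (fun y => ν y - μh y) := by
  have h1γ : (0:ℝ) < 1 - γ := by linarith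
  set E := l1 (fun y => ν y - μh y) with hE
  have hE0 : 0 ≤ E := l1_nonneg _
  set dQ := supQ (fun x a => Q x a - Qh x a) with hdQ
  have hc0 : 0 ≤ fnorm / (1 - γ) := div_nonneg hfnorm0 h1γ.le
  have key : dQ ≤ Lf * E + γ * dQ + γ * (Lp * E) * (fnorm / (1 - γ)) := by
    rw [hdQ, supQ_le_iff]
    intro x a
    have hxa : Q x a - Qh x a = (f x a ν - f x a μh)
        + γ * (∑ x', p x a ν x' * (minRow (Q x') - minRow (Qh x')))
        + γ * (∑ x', (p x a ν x' - p x a μh x') * minRow (Qh x')) := by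
      conv_lhs => rw [← hQfix, ← hQhfix]
      unfold bell
      have s1 : (∑ x', p x a ν x' * (minRow (Q x') - minRow (Qh x')))
          = (∑ x', p x a ν x' * minRow (Q x')) - ∑ x', p x a ν x' * minRow (Qh x') := by
        rw [← Finset.sum_sub_distrib]
        exact Finset.sum_congr rfl fun x' _ => mul_sub _ _ _
      have s2 : (∑ x', (p x a ν x' - p x a μh x') * minRow (Qh x'))
          = (∑ x', p x a ν x' * minRow (Qh x')) - ∑ x', p x a μh x' * minRow (Qh x') := by
        rw [← Finset.sum_sub_distrib]
        exact Finset.sum_congr rfl fun x' _ => sub_mul _ _ _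
      rw [s1, s2]
      ring
    rw [hxa]
    have h2 : |∑ x', p x a ν x' * (minRow (Q x') - minRow (Qh x'))| ≤ dQ := by
      calc |∑ x', p x a ν x' * (minRow (Q x') - minRow (Qh x'))|
          ≤ ∑ x', |p x a ν x' * (minRow (Q x') - minRow (Qh x'))| :=
            Finset.abs_sum_le_sum_abs _ _
        _ = ∑ x', p x a ν x' * |minRow (Q x') - minRow (Qh x')| := by
            exact Finset.sum_congr rfl fun x' _ => by
              rw [abs_mul, abs_of_nonneg (hp0 x a x')]
        _ ≤ ∑ x', p x a ν x' * dQ := by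
            apply Finset.sum_le_sum
            intro x' _
            apply mul_le_mul_of_nonneg_left _ (hp0 x a x')
            exact minRow_sub_le (Q x') (Qh x') dQ
              (fun a' => le_supQ (fun x a => Q x a - Qh x a) x' a')
        _ = dQ := by rw [← Finset.sum_mul, hp1 x a, one_mul]
    have h3 : |∑ x', (p x a ν x' - p x a μh x') * minRow (Qh x')|
        ≤ (Lp * E) * (fnorm / (1 - γ)) := by
      calc |∑ x', (p x a ν x' - p x a μh x') * minRow (Qh x')|
          ≤ ∑ x', |(p x a ν x' - p x a μh x') * minRow (Qh x')| :=
            Finset.abs_sum_le_sum_abs _ _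
        _ = ∑ x', |p x a ν x' - p x a μh x'| * |minRow (Qh x')| := by
            exact Finset.sum_congr rfl fun x' _ => abs_mul _ _
        _ ≤ ∑ x', |p x a ν x' - p x a μh x'| * (fnorm / (1 - γ)) := by
            apply Finset.sum_le_sum
            intro x' _
            apply mul_le_mul_of_nonneg_left _ (abs_nonneg _)
            exact le_trans (minRow_abs_le (Qh x') (supQ Qh) (fun a' => le_supQ Qh x' a')) hQh
        _ = (∑ x', |p x a ν x' - p x a μh x'|) * (fnorm / (1 - γ)) := by
            rw [Finset.sum_mul]
        _ ≤ (Lp * E) * (fnorm / (1 - γ)) :=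
            mul_le_mul_of_nonneg_right (hLp x a) hc0
    calc |f x a ν - f x a μh
          + γ * (∑ x', p x a ν x' * (minRow (Q x') - minRow (Qh x')))
          + γ * (∑ x', (p x a ν x' - p x a μh x') * minRow (Qh x'))|
        ≤ |f x a ν - f x a μh
          + γ * (∑ x', p x a ν x' * (minRow (Q x') - minRow (Qh x')))|
          + |γ * (∑ x', (p x a ν x' - p x a μh x') * minRow (Qh x'))| := abs_add_le _ _
      _ ≤ |f x a ν - f x a μh|
          + |γ * (∑ x', p x a ν x' * (minRow (Q x') - minRow (Qh x')))|
          + |γ * (∑ x', (p x a ν x' - p x a μh x') * minRow (Qh x'))| := by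
          linarith [abs_add_le (f x a ν - f x a μh)
            (γ * (∑ x', p x a ν x' * (minRow (Q x') - minRow (Qh x'))))]
      _ ≤ Lf * E + γ * dQ + γ * ((Lp * E) * (fnorm / (1 - γ))) := by
          rw [abs_mul, abs_mul, abs_of_nonneg hγ0.le]
          have m2 := mul_le_mul_of_nonneg_left h2 hγ0.le
          have m3 := mul_le_mul_of_nonneg_left h3 hγ0.le
          linarith [hLf x a]
      _ = Lf * E + γ * dQ + γ * (Lp * E) * (fnorm / (1 - γ)) := by ring
  have heq : γ * (Lp * E) * (fnorm / (1 - γ)) = γ / (1 - γ) * Lp * fnorm * E := by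
    field_simp
  rw [heq] at key
  nlinarith [key]
end QSide
/-- accuracy of the soft-min MFC fixed point:
‖μ*_{Q*φ} − μ̂‖₁ ≤ 2√|𝒜|(1−γ)exp(−φδ)/((L_f + (γ/(1−γ))L_p‖f‖∞)(φ_max − φ)) and
‖Q*φ − Q̂‖∞ ≤ 2√|𝒜|exp(−φδ)/(φ_max − φ). -/
theorem mfc_accuracy [Fintype X] [Fintype A] [Nonempty X] [Nonempty A]
    (γ : ℝ) (hγ0 : 0 < γ) (hγ1 : γ < 1)
    (f : X → A → (X → ℝ) → ℝ) (fnorm : ℝ)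
    (hf : ∀ x a μ, IsProb μ → |f x a μ| ≤ fnorm)
    (p : X → A → (X → ℝ) → X → ℝ)
    (hp0 : ∀ x a μ x', IsProb μ → 0 ≤ p x a μ x')
    (hp1 : ∀ x a μ, IsProb μ → ∑ x', p x a μ x' = 1)
    (cmin Lf Lp : ℝ) (hcmin0 : 0 ≤ cmin)
    (hcmin : ∀ x a μ x', IsProb μ → cmin ≤ p x a μ x')
    (hLf0 : 0 ≤ Lf) (hLp0 : 0 ≤ Lp)
    (hLf : ∀ x a μ μ', IsProb μ → IsProb μ' →
      |f x a μ - f x a μ'| ≤ Lf * l1 (fun y => μ y - μ' y))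
    (hLp : ∀ x a μ μ', IsProb μ → IsProb μ' →
      ∑ x', |p x a μ x' - p x a μ' x'| ≤ Lp * l1 (fun y => μ y - μ' y))
    (hLpc : Lp < (Fintype.card X : ℝ) * cmin)
    (φmax : ℝ)
    (hφmaxdef : φmax = ((Fintype.card X : ℝ) * cmin - Lp) / (Fintype.card A : ℝ)
        * ((1 - γ) / (Lf + (γ / (1 - γ)) * Lp * fnorm)))
    (φ : ℝ) (hφ0 : 0 < φ) (hφmax : φ < φmax)
    -- the pair (μ̂, Q̂) solving the MFC fixed-point system
    (μhat : X → ℝ) (Qhat : X → A → ℝ) (hμhat : IsProb μhat)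
    (hμhatfix : Ppush p (fun x' => argminE (Qhat x')) μhat μhat = μhat)
    (hQhatfix : bell f p γ μhat Qhat = Qhat)
    -- δ is (a positive lower bound for) the action gap of Q̂
    (δ : ℝ) (hδ0 : 0 < δ)
    (hgap : ∀ x a, minRow (Qhat x) < Qhat x a → minRow (Qhat x) + δ ≤ Qhat x a)
    (hφδ : 0 < φmax - 1 / δ)
    -- μ*_Q : the unique fixed point of μ ↦ P^{softmin_φ Q, μ} μ
    (mustar : (X → A → ℝ) → X → ℝ)
    (hmustar : ∀ Q : X → A → ℝ, IsProb (mustar Q) ∧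
      Ppush p (fun x' => softmin φ (Q x')) (mustar Q) (mustar Q) = mustar Q)
    -- Q*φ : the unique fixed point of Q ↦ B_{μ*_Q} Q
    (Qstarφ : X → A → ℝ) (hQball : supQ Qstarφ ≤ fnorm / (1 - γ))
    (hQfix : bell f p γ (mustar Qstarφ) Qstarφ = Qstarφ) :
    l1 (fun x => mustar Qstarφ x - μhat x)
        ≤ 2 * Real.sqrt (Fintype.card A) * (1 - γ) * Real.exp (-φ * δ)
            / ((Lf + (γ / (1 - γ)) * Lp * fnorm) * (φmax - φ))
    ∧ supQ (fun x a => Qstarφ x a - Qhat x a)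
        ≤ 2 * Real.sqrt (Fintype.card A) * Real.exp (-φ * δ) / (φmax - φ) := by
  classical
  obtain ⟨hνProb, hνfix⟩ := hmustar Qstarφ
  have h1γ : (0:ℝ) < 1 - γ := by linarith
  have hfnorm0 : 0 ≤ fnorm :=
    le_trans (abs_nonneg _) (hf (Classical.arbitrary X) (Classical.arbitrary A) μhat hμhat)
  have hD0 : 0 ≤ Lf + γ / (1 - γ) * Lp * fnorm :=
    add_nonneg hLf0 (mul_nonneg (mul_nonneg (div_nonneg hγ0.le h1γ.le) hLp0) hfnorm0)
  have hDpos : 0 < Lf + γ / (1 - γ) * Lp * fnorm := by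
    rcases lt_or_eq_of_le hD0 with h | h
    · exact h
    · exfalso
      rw [← h, div_zero, mul_zero] at hφmaxdef
      linarith
  have hφmaxpos : 0 < φmax - φ := by linarith
  have hc : 0 < (Fintype.card X : ℝ) * cmin - Lp := by linarith
  -- Q-side estimates
  have hQhatb : supQ Qhat ≤ fnorm / (1 - γ) :=
    qhat_bound γ hγ0 hγ1 f fnorm p μhat (fun x a => hf x a μhat hμhat)
      (fun x a x' => hp0 x a μhat x' hμhat) (fun x a => hp1 x a μhat hμhat) Qhat hQhatfix
  have hQd := qdiff γ hγ0 hγ1 f p (mustar Qstarφ) μhat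
      (fun x a x' => hp0 x a (mustar Qstarφ) x' hνProb)
      (fun x a => hp1 x a (mustar Qstarφ) hνProb)
      Lf Lp fnorm hLp0 hfnorm0
      (fun x a => hLf x a (mustar Qstarφ) μhat hνProb hμhat)
      (fun x a => hLp x a (mustar Qstarφ) μhat hνProb hμhat)
      Qstarφ Qhat hQfix hQhatfix hQhatb
  set E := l1 (fun x => mustar Qstarφ x - μhat x) with hE
  have hE0 : 0 ≤ E := l1_nonneg _
  set dQ := supQ (fun x a => Qstarφ x a - Qhat x a) with hdQ
  have hdQ0 : 0 ≤ dQ := supQ_nonneg _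
  have hsqrt1 : (1:ℝ) ≤ Real.sqrt (Fintype.card A : ℝ) := by
    rw [show (1:ℝ) = Real.sqrt 1 from (Real.sqrt_one).symm]
    apply Real.sqrt_le_sqrt
    have : 1 ≤ Fintype.card A := Fintype.card_pos
    exact_mod_cast this
  have hxε : (0:ℝ) < Real.exp (-φ * δ) := Real.exp_pos _
  rcases subsingleton_or_nontrivial A with hA | hA
  · -- trivial action space : policies coincide
    obtain ⟨a0⟩ := (inferInstance : Nonempty A)
    have huniv : (Finset.univ : Finset A) = {a0} := by
      apply Finset.eq_singleton_iff_unique_mem.mpr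
      exact ⟨Finset.mem_univ a0, fun b _ => Subsingleton.elim b a0⟩
    have hB : ∀ x, ∑ a, |softmin φ (Qstarφ x) a - argminE (Qhat x) a| ≤ 0 := by
      intro x
      rw [huniv, Finset.sum_singleton]
      have h1 : softmin φ (Qstarφ x) a0 = 1 := by
        have := softmin_sum φ (Qstarφ x); rw [huniv, Finset.sum_singleton] at this
        exact this
      have h2 : argminE (Qhat x) a0 = 1 := by
        have := argminE_sum (Qhat x); rw [huniv, Finset.sum_singleton] at this
        exact this
      rw [h1, h2, sub_self, abs_zero]
    have hchain := measure_chain p (mustar Qstarφ) μhat hνProb hμhat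
      (fun x a x' => hp0 x a μhat x' hμhat)
      (fun x a => hp1 x a (mustar Qstarφ) hνProb) (fun x a => hp1 x a μhat hμhat)
      cmin hcmin0 (fun x a x' => hcmin x a (mustar Qstarφ) x' hνProb)
      Lp (fun x a => hLp x a (mustar Qstarφ) μhat hνProb hμhat)
      (fun x' => softmin φ (Qstarφ x')) (fun x' => argminE (Qhat x'))
      (fun x a => (softmin_pos φ (Qstarφ x) a).le) (fun x => softmin_sum φ (Qstarφ x))
      (fun x a => argminE_nonneg (Qhat x) a) (fun x => argminE_sum (Qhat x))
      hνfix hμhatfix 0 hB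
    rw [← hE] at hchain
    have hEz : E = 0 := le_antisymm (by nlinarith [hchain]) hE0
    have hdQz : dQ ≤ 0 := by nlinarith [hQd, hEz]
    constructor
    · rw [hEz]
      apply div_nonneg _ (mul_nonneg hDpos.le hφmaxpos.le)
      exact mul_nonneg (mul_nonneg (mul_nonneg (by norm_num) (Real.sqrt_nonneg _)) h1γ.le)
        hxε.le
    · exact le_trans hdQz
        (div_nonneg (mul_nonneg (mul_nonneg (by norm_num) (Real.sqrt_nonneg _)) hxε.le)
          hφmaxpos.le)
  · -- nontrivial action space
    have hA2 : (2:ℝ) ≤ (Fintype.card A : ℝ) := by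
      exact_mod_cast Fintype.one_lt_card
    have hn0 : (0:ℝ) < (Fintype.card A : ℝ) := by linarith
    have hB : ∀ x, ∑ a, |softmin φ (Qstarφ x) a - argminE (Qhat x) a|
        ≤ 2 * φ * dQ + 2 * (Fintype.card A : ℝ) * Real.exp (-φ * δ) := by
      intro x
      have hlip := softmin_lipschitz φ hφ0.le (Qhat x) (Qstarφ x) dQ
        (fun a => le_supQ (fun x a => Qstarφ x a - Qhat x a) x a)
      have hclose := softmin_argmin_close φ δ hφ0.le (Qhat x) (hgap x)
      calc ∑ a, |softmin φ (Qstarφ x) a - argminE (Qhat x) a|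
          ≤ ∑ a, (|softmin φ (Qstarφ x) a - softmin φ (Qhat x) a|
              + |softmin φ (Qhat x) a - argminE (Qhat x) a|) := by
            apply Finset.sum_le_sum
            intro a _
            exact abs_sub_le _ _ _
        _ = (∑ a, |softmin φ (Qstarφ x) a - softmin φ (Qhat x) a|)
              + ∑ a, |softmin φ (Qhat x) a - argminE (Qhat x) a| :=
            Finset.sum_add_distrib
        _ ≤ 2 * φ * dQ + 2 * (Fintype.card A : ℝ) * Real.exp (-φ * δ) := by
            linarith
    have hchain := measure_chain p (mustar Qstarφ) μhat hνProb hμhat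
      (fun x a x' => hp0 x a μhat x' hμhat)
      (fun x a => hp1 x a (mustar Qstarφ) hνProb) (fun x a => hp1 x a μhat hμhat)
      cmin hcmin0 (fun x a x' => hcmin x a (mustar Qstarφ) x' hνProb)
      Lp (fun x a => hLp x a (mustar Qstarφ) μhat hνProb hμhat)
      (fun x' => softmin φ (Qstarφ x')) (fun x' => argminE (Qhat x'))
      (fun x a => (softmin_pos φ (Qstarφ x) a).le) (fun x => softmin_sum φ (Qstarφ x))
      (fun x a => argminE_nonneg (Qhat x) a) (fun x => argminE_sum (Qhat x))
      hνfix hμhatfix _ hB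
    rw [← hE] at hchain
    -- arithmetic
    set n := (Fintype.card A : ℝ) with hn
    set xe := Real.exp (-φ * δ) with hxe
    set DD := Lf + γ / (1 - γ) * Lp * fnorm with hDD
    set cc := (Fintype.card X : ℝ) * cmin - Lp with hcc
    set s := Real.sqrt n with hs
    clear_value s E dQ n xe DD cc
    have hcEq : cc * (1 - γ) = n * φmax * DD := by
      rw [hφmaxdef]
      field_simp
    have hDE : 0 ≤ DD * E := mul_nonneg hDpos.le hE0
    have m1 := mul_le_mul_of_nonneg_left hchain h1γ.le
    have m2 := mul_le_mul_of_nonneg_left hQd (by positivity : (0:ℝ) ≤ 2 * φ)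
    have hcEqE : cc * (1 - γ) * E = n * φmax * DD * E := by rw [hcEq]
    have e1 : n * φmax * (DD * E) ≤ 2 * φ * (DD * E) + (1 - γ) * (2 * n * xe) := by
      linarith [m1, m2, hcEqE]
    have e2 : (DD * E) * (n * (φmax - φ)) ≤ (1 - γ) * (2 * n * xe) := by
      linarith [e1, mul_nonneg (mul_nonneg (by linarith : (0:ℝ) ≤ n - 2) hφ0.le) hDE]
    have e3 : (DD * E) * (φmax - φ) ≤ (1 - γ) * (2 * xe) := by
      have h6 : ((DD * E) * (φmax - φ)) * n ≤ ((1 - γ) * (2 * xe)) * n := by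
        linarith [e2]
      exact le_of_mul_le_mul_right h6 hn0
    constructor
    · rw [le_div_iff₀ (mul_pos hDpos hφmaxpos)]
      linarith [e3, mul_nonneg (mul_nonneg (by linarith [hsqrt1] : (0:ℝ) ≤ s - 1)
        (by linarith [hxε] : (0:ℝ) ≤ 2 * xe)) h1γ.le]
    · rw [le_div_iff₀ hφmaxpos]
      have m3 := mul_le_mul_of_nonneg_right hQd hφmaxpos.le
      have h5 : (dQ * (φmax - φ)) * (1 - γ) ≤ (2 * xe) * (1 - γ) := by
        linarith [m3, e3]
      have h4 : dQ * (φmax - φ) ≤ 2 * xe := le_of_mul_le_mul_right h5 h1γ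
      linarith [h4, mul_nonneg (by linarith [hsqrt1] : (0:ℝ) ≤ s - 1)
        (by linarith [hxε] : (0:ℝ) ≤ 2 * xe)]
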